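/- Assume q_n ≥ c > 0 for all n ∈ ℤ₀. If y = (y_n)_{n∈ℤ} is a solution of problem (P) whose restriction to ℤ₀ is square-summable (∑_{n∈ℤ₀} |y_n|² < ∞), then y_n = 0 for all n ∈ ℤ. Consequently the operator L : D ⊂ l₀² → l₀² has trivial kernel and is injective. -/

import Mathlib

open ComplexConjugate

/-- The index set ℤ₀ = ℤ \ {0,1} as a subtype. -/
abbrev Z0 := {n : ℤ // n ≠ 0 ∧ n ≠ 1}

noncomputable def e2 (δ : ℝ) : ℂ := Complex.exp (2 * (δ : ℂ) * Complex.I)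

/-- Extension of y : ℤ → ℂ by the auxiliary values y₁ = y_{−1} and
y₀ = (1 − e^{2iδ}) y_{−1} + e^{2iδ} y₂ coming from the impulse conditions. -/
noncomputable def ext (δ : ℝ) (y : ℤ → ℂ) : ℤ → ℂ := fun n =>
  if n = 0 then (1 - e2 δ) * y (-1) + e2 δ * y 2
  else if n = 1 then y (-1)
  else y n

/-- (Ly)_n = −Δ²y_{n−1} + q_n y_n for n ∈ ℤ₀, using the auxiliary values. -/
noncomputable def Lop (δ : ℝ) (q : ℤ → ℝ) (y : ℤ → ℂ) (n : ℤ) : ℂ :=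
  -(ext δ y (n + 1) - 2 * ext δ y n + ext δ y (n - 1)) + (q n : ℂ) * y n

/-- Membership in the domain D = { y ∈ l₀² : (qₙ yₙ) ∈ l₀² }. -/
def MemD (q : ℤ → ℝ) (y : ℤ → ℂ) : Prop :=
  Summable (fun n : Z0 => ‖y (n : ℤ)‖ ^ 2) ∧
  Summable (fun n : Z0 => ‖(q (n : ℤ) : ℂ) * y (n : ℤ)‖ ^ 2)


/- Problem (P): −Δ²y_{n−1} + q_n y_n = 0 on ℤ₀ = ℤ \ {0,1}, with impulse conditions
   y_{−1} = y₁, Δy_{−1} = e^{2iδ} Δy₁, for a sequence y : ℤ → ℂ. -/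
def IsSolP (δ : ℝ) (q : ℤ → ℝ) (y : ℤ → ℂ) : Prop :=
  (∀ n : ℤ, n ≠ 0 → n ≠ 1 →
    -(y (n + 1) - 2 * y n + y (n - 1)) + (q n : ℂ) * y n = 0) ∧
  y (-1) = y 1 ∧
  y 0 - y (-1) = e2 δ * (y 2 - y 1)

/-! ### Auxiliary material -/

/-- The "boundary form" `B n = Δy_n · conj (y n)`. -/
noncomputable def Bq (y : ℤ → ℂ) (n : ℤ) : ℂ := (y (n+1) - y n) * conj (y n)

/-- The nonnegative increment `G n = q n ‖y n‖² + ‖Δ y_{n-1}‖²`. -/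
noncomputable def Gq (q : ℤ → ℝ) (y : ℤ → ℂ) (n : ℤ) : ℝ :=
  q n * ‖y n‖^2 + ‖y n - y (n-1)‖^2

lemma norm_sq_cast (z : ℂ) : ((‖z‖^2 : ℝ) : ℂ) = z * conj z := by
  rw [Complex.mul_conj]; norm_cast
  rw [Complex.sq_norm]

lemma Bq_step {δ : ℝ} {q : ℤ → ℝ} {y : ℤ → ℂ} (hy : IsSolP δ q y)
    (n : ℤ) (h0 : n ≠ 0) (h1 : n ≠ 1) :
    Bq y n = Bq y (n-1) + (Gq q y n : ℂ) := by
  have he := hy.1 n h0 h1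
  simp only [Bq, Gq]
  rw [show n - 1 + 1 = n from by ring, Complex.ofReal_add, Complex.ofReal_mul,
    norm_sq_cast, norm_sq_cast, map_sub]
  linear_combination (- conj (y n)) * he

lemma e2_im (δ : ℝ) : (e2 δ).im = Real.sin (2*δ) := by
  rw [e2, show 2*(δ:ℂ)*Complex.I = ((2*δ:ℝ):ℂ)*Complex.I from by push_cast; ring,
    Complex.exp_ofReal_mul_I_im]

lemma e2_re (δ : ℝ) : (e2 δ).re = Real.cos (2*δ) := by
  rw [e2, show 2*(δ:ℂ)*Complex.I = ((2*δ:ℝ):ℂ)*Complex.I from by push_cast; ring,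
    Complex.exp_ofReal_mul_I_re]

/-- Main auxiliary lemma: any square-summable solution of (P) vanishes. -/
lemma solP_zero (δ : ℝ) (hδ : 0 ≤ δ ∧ δ < Real.pi / 2)
    (q : ℤ → ℝ) (c : ℝ) (hc : 0 < c) (hq : ∀ n : ℤ, n ≠ 0 → n ≠ 1 → c ≤ q n)
    (y : ℤ → ℂ) (hy : IsSolP δ q y)
    (hsum : Summable (fun n : Z0 => ‖y (n : ℤ)‖ ^ 2)) : ∀ n : ℤ, y n = 0 := by
  classical
  -- tendsto helper
  have htd : ∀ f : ℕ → ℤ, Function.Injective f → (∀ k, f k ≠ 0) → (∀ k, f k ≠ 1) →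
      Filter.Tendsto (fun k => y (f k)) Filter.atTop (nhds 0) := by
    intro f hinj h0 h1
    have hinj' : Function.Injective (fun k : ℕ => (⟨f k, h0 k, h1 k⟩ : Z0)) := by
      intro a b hab
      exact hinj (congrArg Subtype.val hab)
    have h2 := hsum.tendsto_cofinite_zero.comp hinj'.tendsto_cofinite
    rw [Nat.cofinite_eq_atTop] at h2
    rw [tendsto_zero_iff_norm_tendsto_zero]
    have h3 := (Real.continuous_sqrt.tendsto 0).comp h2
    simpa [Function.comp_def, Real.sqrt_sq, norm_nonneg] using h3
  have hG : ∀ n : ℤ, n ≠ 0 → n ≠ 1 → 0 ≤ Gq q y n := fun n h0 h1 =>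
    add_nonneg (mul_nonneg (le_trans hc.le (hq n h0 h1)) (sq_nonneg _)) (sq_nonneg _)
  set T : ℕ → ℝ := fun k => ∑ j ∈ Finset.range k, Gq q y ((j:ℤ)+2) with hTdef
  set T' : ℕ → ℝ := fun k => ∑ j ∈ Finset.range (k+1), Gq q y (-(j:ℤ)-1) with hT'def
  -- telescoping identities
  have hBA : ∀ k : ℕ, Bq y ((k:ℤ)+2) = Bq y 1 + (T (k+1) : ℂ) := by
    intro k
    induction k with
    | zero =>
      have h := Bq_step hy 2 (by norm_num) (by norm_num)
      norm_num at h
      simpa [hTdef] using h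
    | succ k ih =>
      have h := Bq_step hy ((k:ℤ)+3) (by omega) (by omega)
      rw [show (k:ℤ)+3-1 = (k:ℤ)+2 from by ring] at h
      have hsum1 : T (k+2) = T (k+1) + Gq q y ((k:ℤ)+3) := by
        simp only [hTdef, Finset.sum_range_succ]
        rw [show ((k+1:ℕ):ℤ) + 2 = (k:ℤ)+3 from by push_cast; ring]
      rw [show ((k+1:ℕ):ℤ)+2 = (k:ℤ)+3 from by push_cast; ring, h, ih, hsum1]
      push_cast; ring
  have hBB : ∀ k : ℕ, Bq y (-1) = Bq y (-(k:ℤ)-2) + (T' k : ℂ) := by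
    intro k
    induction k with
    | zero =>
      have h := Bq_step hy (-1) (by norm_num) (by norm_num)
      norm_num at h
      simpa [hT'def] using h
    | succ k ih =>
      have h := Bq_step hy (-(k:ℤ)-2) (by omega) (by omega)
      rw [show -(k:ℤ)-2-1 = -(k:ℤ)-3 from by ring] at h
      have hsum1 : T' (k+1) = T' k + Gq q y (-(k:ℤ)-2) := by
        simp only [hT'def, Finset.sum_range_succ]
        rw [show -((k+1:ℕ):ℤ) - 1 = -(k:ℤ)-2 from by push_cast; ring]
      rw [show -((k+1:ℕ):ℤ)-2 = -(k:ℤ)-3 from by push_cast; ring, hsum1, ih, h]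
      push_cast; ring
  -- limits of B at ±∞
  have hA : Filter.Tendsto (fun k : ℕ => Bq y ((k:ℤ)+2)) Filter.atTop (nhds 0) := by
    have h2 := htd (fun k => (k:ℤ)+2) (by intro a b h; dsimp only at h; omega) (by intro k; omega) (by intro k; omega)
    have h3 := htd (fun k => (k:ℤ)+3) (by intro a b h; dsimp only at h; omega) (by intro k; omega) (by intro k; omega)
    have hcj : Filter.Tendsto (fun k : ℕ => conj (y ((k:ℤ)+2))) Filter.atTop (nhds 0) := by
      have := (Complex.continuous_conj.tendsto 0).comp h2
      simpa [Function.comp_def] using this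
    have := (h3.sub h2).mul hcj
    simpa [Bq, show ∀ k : ℕ, (k:ℤ)+2+1 = (k:ℤ)+3 from fun k => by ring] using this
  have hA' : Filter.Tendsto (fun k : ℕ => Bq y (-(k:ℤ)-2)) Filter.atTop (nhds 0) := by
    have h2 := htd (fun k => -(k:ℤ)-2) (by intro a b h; dsimp only at h; omega) (by intro k; omega) (by intro k; omega)
    have h3 := htd (fun k => -(k:ℤ)-1) (by intro a b h; dsimp only at h; omega) (by intro k; omega) (by intro k; omega)
    have hcj : Filter.Tendsto (fun k : ℕ => conj (y (-(k:ℤ)-2))) Filter.atTop (nhds 0) := by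
      have := (Complex.continuous_conj.tendsto 0).comp h2
      simpa [Function.comp_def] using this
    have := (h3.sub h2).mul hcj
    simpa [Bq, show ∀ k : ℕ, -(k:ℤ)-2+1 = -(k:ℤ)-1 from fun k => by ring] using this
  -- limits of T, T'
  have hTlim : Filter.Tendsto (fun k : ℕ => (T (k+1) : ℂ)) Filter.atTop (nhds (- Bq y 1)) := by
    have heq : (fun k : ℕ => ((T (k+1) : ℝ) : ℂ)) = fun k : ℕ => Bq y ((k:ℤ)+2) - Bq y 1 := by
      funext k; rw [hBA k]; ring
    rw [heq]
    simpa using hA.sub (tendsto_const_nhds (x := Bq y 1))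
  have hT'lim : Filter.Tendsto (fun k : ℕ => (T' k : ℂ)) Filter.atTop (nhds (Bq y (-1))) := by
    have heq : (fun k : ℕ => ((T' k : ℝ) : ℂ)) = fun k : ℕ => Bq y (-1) - Bq y (-(k:ℤ)-2) := by
      funext k; rw [hBB k]; ring
    rw [heq]
    simpa using (tendsto_const_nhds (x := Bq y (-1))).sub hA'
  -- imaginary parts vanish
  have hIm1 : (Bq y 1).im = 0 := by
    have h1 := (Complex.continuous_im.tendsto _).comp hTlim
    have h2 : Filter.Tendsto (fun _ : ℕ => (0:ℝ)) Filter.atTop (nhds ((- Bq y 1).im)) := by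
      simpa [Function.comp_def] using h1
    have h3 := tendsto_nhds_unique h2 tendsto_const_nhds
    simpa [neg_eq_zero] using h3
  have hIm2 : (Bq y (-1)).im = 0 := by
    have h1 := (Complex.continuous_im.tendsto _).comp hT'lim
    have h2 : Filter.Tendsto (fun _ : ℕ => (0:ℝ)) Filter.atTop (nhds ((Bq y (-1)).im)) := by
      simpa [Function.comp_def] using h1
    exact tendsto_nhds_unique h2 tendsto_const_nhds
  -- real parts: limits of T, T'
  have hTlimR : Filter.Tendsto (fun k : ℕ => T (k+1)) Filter.atTop (nhds (-(Bq y 1).re)) := by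
    have := (Complex.continuous_re.tendsto _).comp hTlim
    simpa [Function.comp_def] using this
  have hTlimR' : Filter.Tendsto T Filter.atTop (nhds (-(Bq y 1).re)) :=
    (Filter.tendsto_add_atTop_iff_nat 1).mp hTlimR
  have hT'limR : Filter.Tendsto T' Filter.atTop (nhds ((Bq y (-1)).re)) := by
    have := (Complex.continuous_re.tendsto _).comp hT'lim
    simpa [Function.comp_def] using this
  have hTnonneg : ∀ k, 0 ≤ T k := fun k =>
    Finset.sum_nonneg fun j _ => hG _ (by omega) (by omega)
  have hT'nonneg : ∀ k, 0 ≤ T' k := fun k =>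
    Finset.sum_nonneg fun j _ => hG _ (by omega) (by omega)
  have hSr : 0 ≤ -(Bq y 1).re := ge_of_tendsto' hTlimR' hTnonneg
  have hSl : 0 ≤ (Bq y (-1)).re := ge_of_tendsto' hT'limR hT'nonneg
  -- the relation B(-1) = e^{2iδ} B 1
  have hrel : Bq y (-1) = e2 δ * Bq y 1 := by
    have h2 := hy.2.1
    have h3 := hy.2.2
    rw [h2] at h3
    simp only [Bq]
    rw [show (-1:ℤ)+1 = 0 from by ring, show (1:ℤ)+1 = 2 from by ring, h2]
    linear_combination (conj (y 1)) * h3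
  -- sin(2δ) * Re(B 1) = 0
  have hsin : Real.sin (2*δ) * (Bq y 1).re = 0 := by
    have h := hIm2
    rw [hrel, Complex.mul_im, hIm1, e2_im] at h
    simpa using h
  have hb0 : (Bq y 1).re = 0 := by
    by_contra hb
    have hsz : Real.sin (2*δ) = 0 := by
      rcases mul_eq_zero.mp hsin with h | h
      · exact h
      · exact absurd h hb
    have hpi := Real.pi_pos
    have h2δ : 2*δ = 0 :=
      (Real.sin_eq_zero_iff_of_lt_of_lt (by linarith [hδ.1]) (by linarith [hδ.2])).mp hsz
    have hδ0 : δ = 0 := by linarith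
    have he1 : e2 δ = 1 := by rw [hδ0]; simp [e2]
    have hre : (Bq y (-1)).re = (Bq y 1).re := by rw [hrel, he1, one_mul]
    rw [hre] at hSl
    exact hb (le_antisymm (by linarith) hSl)
  have hb : Bq y 1 = 0 := Complex.ext (by simpa using hb0) (by simpa using hIm1)
  have hbm : Bq y (-1) = 0 := by rw [hrel, hb, mul_zero]
  -- monotonicity gives T ≡ 0, T' ≡ 0
  have hTmono : Monotone T := monotone_nat_of_le_succ fun k => by
    simp only [hTdef, Finset.sum_range_succ]
    exact le_add_of_nonneg_right (hG _ (by omega) (by omega))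
  have hT'mono : Monotone T' := monotone_nat_of_le_succ fun k => by
    simp only [hT'def, Finset.sum_range_succ]
    exact le_add_of_nonneg_right (hG _ (by omega) (by omega))
  have hTl0 : Filter.Tendsto T Filter.atTop (nhds 0) := by
    simpa [hb0] using hTlimR'
  have hT'l0 : Filter.Tendsto T' Filter.atTop (nhds 0) := by
    have : (Bq y (-1)).re = 0 := by rw [hbm]; simp
    simpa [this] using hT'limR
  have hTz : ∀ k, T k = 0 := fun k =>
    le_antisymm (hTmono.ge_of_tendsto hTl0 k) (hTnonneg k)
  have hT'z : ∀ k, T' k = 0 := fun k =>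
    le_antisymm (hT'mono.ge_of_tendsto hT'l0 k) (hT'nonneg k)
  -- Gq vanishes, hence y vanishes on ℤ₀
  have hGz : ∀ n : ℤ, n ≠ 0 → n ≠ 1 → Gq q y n = 0 := by
    intro n h0 h1
    rcases le_or_gt 2 n with hn | hn
    · have h := hTz ((n-2).toNat+1)
      simp only [hTdef] at h
      have h2 := (Finset.sum_eq_zero_iff_of_nonneg
        (by intro j _; exact hG ((j:ℤ)+2) (by omega) (by omega))).mp h (n-2).toNat
        (Finset.self_mem_range_succ _)
      rwa [show (((n-2).toNat:ℤ)+2) = n from by omega] at h2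
    · have hn' : n ≤ -1 := by omega
      have h := hT'z (-1-n).toNat
      simp only [hT'def] at h
      have h2 := (Finset.sum_eq_zero_iff_of_nonneg
        (by intro j _; exact hG (-(j:ℤ)-1) (by omega) (by omega))).mp h (-1-n).toNat
        (Finset.self_mem_range_succ _)
      rwa [show -(((-1-n).toNat:ℤ))-1 = n from by omega] at h2
  have hyz : ∀ n : ℤ, n ≠ 0 → n ≠ 1 → y n = 0 := by
    intro n h0 h1
    have h := hGz n h0 h1
    have hqn : 0 < q n := lt_of_lt_of_le hc (hq n h0 h1)
    have h1' : 0 ≤ q n * ‖y n‖^2 := mul_nonneg hqn.le (sq_nonneg _)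
    have h2' : 0 ≤ ‖y n - y (n-1)‖^2 := sq_nonneg _
    have h3 : q n * ‖y n‖^2 = 0 := by
      simp only [Gq] at h; linarith
    have h4 : ‖y n‖^2 = 0 := by
      rcases mul_eq_zero.mp h3 with h' | h'
      · exact absurd h' hqn.ne'
      · exact h'
    have h5 : ‖y n‖ = 0 := by
      have := sq_eq_zero_iff.mp h4
      exact this
    exact norm_eq_zero.mp h5
  -- conclude for all n
  intro n
  by_cases h0 : n = 0
  · subst h0
    have hy1 : y 1 = 0 := by rw [← hy.2.1]; exact hyz (-1) (by norm_num) (by norm_num)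
    have hym1 : y (-1) = 0 := hyz (-1) (by norm_num) (by norm_num)
    have hy2v : y 2 = 0 := hyz 2 (by norm_num) (by norm_num)
    have h3 := hy.2.2
    rw [hy1, hym1, hy2v] at h3
    simpa using h3
  · by_cases h1 : n = 1
    · subst h1
      rw [← hy.2.1]; exact hyz (-1) (by norm_num) (by norm_num)
    · exact hyz n h0 h1

/-- if q_n ≥ c > 0 on ℤ₀, then every solution of (P) that is square
summable over ℤ₀ vanishes identically; consequently the operator L has trivial
kernel and is injective. -/
theorem kernel_trivial (δ : ℝ) (hδ : 0 ≤ δ ∧ δ < Real.pi / 2)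
    (q : ℤ → ℝ) (c : ℝ) (hc : 0 < c) (hq : ∀ n : ℤ, n ≠ 0 → n ≠ 1 → c ≤ q n) :
    (∀ y : ℤ → ℂ, IsSolP δ q y → Summable (fun n : Z0 => ‖y (n : ℤ)‖ ^ 2) →
      ∀ n : ℤ, y n = 0) ∧
    (∀ y : ℤ → ℂ, MemD q y → (∀ n : ℤ, n ≠ 0 → n ≠ 1 → Lop δ q y n = 0) →
      ∀ n : ℤ, n ≠ 0 → n ≠ 1 → y n = 0) := by
  constructor
  · exact fun y hy hsum => solP_zero δ hδ q c hc hq y hy hsum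
  · intro y hD hL n hn0 hn1
    have hzeq : ∀ m : ℤ, m ≠ 0 → m ≠ 1 → ext δ y m = y m := by
      intro m h0 h1
      simp [ext, h0, h1]
    have hzsol : IsSolP δ q (ext δ y) := by
      refine ⟨?_, ?_, ?_⟩
      · intro m h0 h1
        have h := hL m h0 h1
        simp only [Lop] at h
        have hme := hzeq m h0 h1
        linear_combination h + (q m : ℂ) * hme
      · rw [hzeq (-1) (by norm_num) (by norm_num)]
        simp [ext]
      · rw [hzeq (-1) (by norm_num) (by norm_num), hzeq 2 (by norm_num) (by norm_num)]
        simp only [ext]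
        norm_num
        ring
    have hzsum : Summable (fun m : Z0 => ‖ext δ y (m : ℤ)‖ ^ 2) := by
      refine hD.1.congr fun m => ?_
      rw [hzeq (m : ℤ) m.2.1 m.2.2]
    have := solP_zero δ hδ q c hc hq (ext δ y) hzsol hzsum n
    rwa [hzeq n hn0 hn1] at this
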